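/- The function ψ(x) := (ψ₁(x), ψ₂(x)) with ψ₁(x) = -e^{-iμ/2} E(x)⁻¹ ∫_x^∞ q(y) dy and ψ₂(x) = e^{-iμ/2} E(x) (1 + (i/2) r(x) ∫_x^∞ q(y) dy) satisfies the zero-energy AKNS system ψ₁' = u ψ₂, ψ₂' = v ψ₁, where u = q E⁻², v = (-(i/2) r' + (1/4) q r²) E², E(x) = exp((i/2)∫_{-∞}^x q r), and μ = ∫_{-∞}^∞ q r. -/

import Mathlib

open Complex MeasureTheory

lemma cont_Iic_hasDerivAt (f : ℝ → ℂ) (hcont : Continuous f) (hint : Integrable f) (x : ℝ) :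
    HasDerivAt (fun t => ∫ y in Set.Iic t, f y) (f x) x := by
  have key : ∀ t : ℝ, (∫ y in Set.Iic t, f y)
      = (∫ y in Set.Iic 0, f y) + ∫ y in (0:ℝ)..t, f y := by
    intro t
    rw [← intervalIntegral.integral_Iic_sub_Iic hint.integrableOn hint.integrableOn]
    ring
  have h1 : HasDerivAt (fun t => (∫ y in Set.Iic 0, f y) + ∫ y in (0:ℝ)..t, f y) (f x) x :=
    HasDerivAt.const_add _ (intervalIntegral.integral_hasDerivAt_right
      hint.intervalIntegrable (hcont.stronglyMeasurableAtFilter _ _)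
      hcont.continuousAt)
  exact h1.congr_of_eventuallyEq (Filter.Eventually.of_forall key)

lemma schwartz_Ioi_hasDerivAt (f : SchwartzMap ℝ ℂ) (x : ℝ) :
    HasDerivAt (fun t => ∫ y in Set.Ioi t, f y) (-(f x)) x := by
  have hint : Integrable (fun y => f y) := f.integrable
  have key : ∀ t : ℝ, (∫ y in Set.Ioi t, f y) = (∫ y, f y) - ∫ y in Set.Iic t, f y := by
    intro t
    rw [← intervalIntegral.integral_Iic_add_Ioi hint.integrableOn hint.integrableOn]
    ring
  have h1 : HasDerivAt (fun t => (∫ y, f y) - ∫ y in Set.Iic t, f y) (-(f x)) x :=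
    (cont_Iic_hasDerivAt f f.continuous f.integrable x).const_sub _
  exact h1.congr_of_eventuallyEq (Filter.Eventually.of_forall key)

theorem zero_energy_jost_psi_uv
    (q r : SchwartzMap ℝ ℂ)
    (E : ℝ → ℂ) (hE : ∀ x, E x = Complex.exp ((I / 2) * ∫ y in Set.Iic x, q y * r y))
    (μ : ℂ) (hμ : μ = ∫ y : ℝ, q y * r y)
    (u v : ℝ → ℂ)
    (hu : ∀ x, u x = q x * (E x) ^ (-2 : ℤ))
    (hv : ∀ x, v x = (-(I / 2) * deriv r x + (1 / 4) * q x * (r x) ^ 2) * (E x) ^ 2)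
    (ψ₁ ψ₂ : ℝ → ℂ)
    (hψ₁ : ∀ x, ψ₁ x = -Complex.exp (-(I * μ) / 2) * (E x)⁻¹ * ∫ y in Set.Ioi x, q y)
    (hψ₂ : ∀ x, ψ₂ x = Complex.exp (-(I * μ) / 2) * E x *
      (1 + (I / 2) * r x * ∫ y in Set.Ioi x, q y)) :
    (∀ x, HasDerivAt ψ₁ (u x * ψ₂ x) x) ∧ (∀ x, HasDerivAt ψ₂ (v x * ψ₁ x) x) := by
  set c : ℂ := Complex.exp (-(I * μ) / 2) with hc
  set F : ℝ → ℂ := fun t => ∫ y in Set.Iic t, q y * r y with hFdef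
  set G : ℝ → ℂ := fun t => ∫ y in Set.Ioi t, q y with hGdef
  have hbdd : ∃ C, ∀ y : ℝ, ‖(q y : ℂ)‖ ≤ C :=
    ⟨SchwartzMap.seminorm ℝ 0 0 q, fun y => SchwartzMap.norm_le_seminorm ℝ q y⟩
  have hint : Integrable (fun y => (q y : ℂ) * r y) :=
    r.integrable.bdd_mul q.continuous.aestronglyMeasurable (Filter.Eventually.of_forall hbdd.choose_spec)
  have hF : ∀ x, HasDerivAt F (q x * r x) x := fun x =>
    cont_Iic_hasDerivAt _ (q.continuous.mul r.continuous) hint x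
  have hG : ∀ x, HasDerivAt G (-(q x)) x := fun x => schwartz_Ioi_hasDerivAt q x
  have hEF : ∀ x, E x = Complex.exp ((I / 2) * F x) := hE
  have hr : ∀ x, HasDerivAt (fun t => (r t : ℂ)) (deriv r x) x := fun x =>
    (r.differentiable.differentiableAt).hasDerivAt
  constructor
  · intro x
    have hψ₁' : ψ₁ = fun t => -c * Complex.exp (-((I / 2) * F t)) * G t := by
      funext t
      rw [hψ₁ t, hE t, Complex.exp_neg]
    rw [hψ₁']
    have hexp : HasDerivAt (fun t => Complex.exp (-((I / 2) * F t)))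
        (Complex.exp (-((I / 2) * F x)) * (-((I / 2) * (q x * r x)))) x :=
      (((hF x).const_mul (I / 2)).neg).cexp
    have hprod := (hexp.const_mul (-c)).mul (hG x)
    convert hprod using 1
    · rfl
    · rfl
    rw [hu x, hψ₂ x, hEF x]
    simp only [zpow_neg, zpow_two, mul_inv, Complex.exp_neg]
    set e := Complex.exp ((I / 2) * F x) with he'
    have he : e ≠ 0 := Complex.exp_ne_zero _
    have hef : e * e⁻¹ = 1 := mul_inv_cancel₀ he
    linear_combination (q x * c * e⁻¹ * (1 + I / 2 * r x * ∫ y in Set.Ioi x, q y)) * hef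
  · intro x
    have hψ₂' : ψ₂ = fun t => c * Complex.exp ((I / 2) * F t) * (1 + (I / 2) * (r t * G t)) := by
      funext t
      rw [hψ₂ t, hE t]
      ring
    rw [hψ₂']
    have hexp : HasDerivAt (fun t => Complex.exp ((I / 2) * F t))
        (Complex.exp ((I / 2) * F x) * ((I / 2) * (q x * r x))) x :=
      ((hF x).const_mul (I / 2)).cexp
    have hinner : HasDerivAt (fun t => 1 + (I / 2) * (r t * G t))
        ((I / 2) * (deriv r x * G x + r x * (-(q x)))) x :=
      HasDerivAt.const_add _ (((hr x).mul (hG x)).const_mul (I / 2))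
    have hprod := (hexp.const_mul c).mul hinner
    convert hprod using 1
    · rfl
    · rfl
    rw [hv x, hψ₁ x, hEF x]
    set e := Complex.exp ((I / 2) * F x) with he'
    have he : e ≠ 0 := Complex.exp_ne_zero _
    have hef : e * e⁻¹ = 1 := mul_inv_cancel₀ he
    have hI : (I : ℂ) ^ 2 = -1 := Complex.I_sq
    linear_combination
      ((-c * e * ∫ y in Set.Ioi x, q y) * (-(I / 2) * deriv r x + 1 / 4 * q x * r x ^ 2)) * hef +
      ((-c * e * ∫ y in Set.Ioi x, q y) * (q x * r x ^ 2 / 4)) * hI
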